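/- arXiv:2005.06882 — 2 statements merged into one kernel-verified Lean document; each statement's English description precedes it below -/
import Mathlib

section
/- Let k ≥ 1 be an integer and suppose u ∈ ℚ[[q]] satisfies g(k) = q^k·u. Set φ := u·S^{−k} ∈ ℚ[[q]]. Then D²(φ) + k·D(φ) = (k²/4)·(E₄ − 1)·φ. (This is the identity D²(f_{1,6k}·Δ^{−k/2}) = (k²/4)·E₄·(f_{1,6k}·Δ^{−k/2}) after factoring out q^{k/2}.) -/
open PowerSeries

noncomputable section

/-- `sigma' j n = ∑_{d ∣ n} d^j`. -/
def sigma' (j n : ℕ) : ℕ := ∑ d ∈ n.divisors, d ^ j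

/-- The Eisenstein series `E₂ = 1 − 24∑σ₁(n)qⁿ`. -/
def E2 : PowerSeries ℚ :=
  PowerSeries.mk fun n => if n = 0 then 1 else -24 * (sigma' 1 n : ℚ)

/-- The Eisenstein series `E₄ = 1 + 240∑σ₃(n)qⁿ`. -/
def E4 : PowerSeries ℚ :=
  PowerSeries.mk fun n => if n = 0 then 1 else 240 * (sigma' 3 n : ℚ)

/-- The Eisenstein series `E₆ = 1 − 504∑σ₅(n)qⁿ`. -/
def E6 : PowerSeries ℚ :=
  PowerSeries.mk fun n => if n = 0 then 1 else -504 * (sigma' 5 n : ℚ)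

/-- The discriminant `Δ = (E₄³ − E₆²)/1728`. -/
def Δ' : PowerSeries ℚ := PowerSeries.C (1/1728) * (E4 ^ 3 - E6 ^ 2)

/-- The derivation `D(f) = q·df/dq`. -/
def Dq {R : Type*} [Semiring R] (f : PowerSeries R) : PowerSeries R :=
  PowerSeries.mk fun n => (n : R) * PowerSeries.coeff n f

/-- `μ_0 = −1` and `μ_k = 12(6k+1)(6k+5)/(k(k+1))` for `k ≥ 1`. -/
def μ (k : ℕ) : ℚ :=
  if k = 0 then -1 else 12 * (6*(k:ℚ)+1) * (6*(k:ℚ)+5) / ((k:ℚ)*((k:ℚ)+1))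

/-- `μ*_0 = −1` and `μ*_k = 12(6k−1)(6k+7)/(k(k+1))` for `k ≥ 1`. -/
def μs (k : ℕ) : ℚ :=
  if k = 0 then -1 else 12 * (6*(k:ℚ)-1) * (6*(k:ℚ)+7) / ((k:ℚ)*((k:ℚ)+1))

/-- `g k` is the q-expansion of the Kaneko–Koike extremal quasimodular form `f_{1,6k}`:
`g 0 = 1`, `g 1 = D(E₄)/240`, `g (k+2) = E₆·g(k+1) + μ_k·Δ·g(k)`. -/
def g : ℕ → PowerSeries ℚ
  | 0 => 1
  | 1 => PowerSeries.C (1/240) * Dq E4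
  | (k+2) => E6 * g (k+1) + PowerSeries.C (μ k) * (Δ' * g k)

/-- `h k` is the q-expansion of the extremal quasimodular form `f_{1,6k+2}`:
`h 0 = E₂`, `h 1 = −D(E₆)/504`, `h (k+2) = E₆·h(k+1) + μ*_k·Δ·h(k)`. -/
def h : ℕ → PowerSeries ℚ
  | 0 => E2
  | 1 => PowerSeries.C (-(1/504)) * Dq E6
  | (k+2) => E6 * h (k+1) + PowerSeries.C (μs k) * (Δ' * h k)

end



namespace Liou
open Finset

def sol (n : ℕ) : Finset ((ℕ×ℕ)×(ℕ×ℕ)) :=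
  ((Icc 1 n ×ˢ Icc 1 n) ×ˢ (Icc 1 n ×ˢ Icc 1 n)).filter
    (fun p => p.1.1 * p.1.2 + p.2.1 * p.2.2 = n)

lemma mem_sol {n : ℕ} {a x b y : ℕ} :
    ((a,x),(b,y)) ∈ sol n ↔ (1 ≤ a ∧ 1 ≤ x ∧ 1 ≤ b ∧ 1 ≤ y) ∧ a*x + b*y = n := by
  simp only [sol, mem_filter, mem_product, mem_Icc]
  constructor
  · rintro ⟨⟨⟨⟨h1,_⟩,⟨h2,_⟩⟩,⟨h3,_⟩,⟨h4,_⟩⟩, he⟩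
    exact ⟨⟨h1,h2,h3,h4⟩, he⟩
  · rintro ⟨⟨h1,h2,h3,h4⟩, he⟩
    have hax : a*x ≤ n := le_trans (Nat.le_add_right _ _) (le_of_eq he)
    have hby : b*y ≤ n := le_trans (Nat.le_add_left _ _) (le_of_eq he)
    have h5 : a ≤ n := le_trans (Nat.le_mul_of_pos_right a h2) hax
    have h6 : x ≤ n := le_trans (Nat.le_mul_of_pos_left x h1) hax
    have h7 : b ≤ n := le_trans (Nat.le_mul_of_pos_right b h4) hby
    have h8 : y ≤ n := le_trans (Nat.le_mul_of_pos_left y h3) hby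
    exact ⟨⟨⟨⟨h1,h5⟩,⟨h2,h6⟩⟩,⟨h3,h7⟩,⟨h4,h8⟩⟩, he⟩

/-- Bijection 1 : region x > y maps to region a < b, value transported. -/
lemma sum_B1 (n : ℕ) (w : ℕ → ℕ → ℚ) :
    ∑ p ∈ (sol n).filter (fun p => p.2.2 < p.1.2), w p.1.1 p.2.1
      = ∑ p ∈ (sol n).filter (fun p => p.1.1 < p.2.1), w p.1.1 (p.2.1 - p.1.1) := by
  refine Finset.sum_nbij'
    (fun p => ((p.1.1, p.1.2 - p.2.2), (p.1.1 + p.2.1, p.2.2)))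
    (fun p => ((p.1.1, p.1.2 + p.2.2), (p.2.1 - p.1.1, p.2.2))) ?_ ?_ ?_ ?_ ?_
  · rintro ⟨⟨a,x⟩,⟨b,y⟩⟩ hp
    rw [Finset.mem_filter] at hp
    obtain ⟨hps, hxy⟩ := hp
    rw [mem_sol] at hps
    obtain ⟨⟨h1,h2,h3,h4⟩, he⟩ := hps
    simp only at hxy ⊢
    rw [Finset.mem_filter]
    refine ⟨mem_sol.mpr ⟨⟨h1, by omega, by omega, h4⟩, ?_⟩, by simp; omega⟩
    obtain ⟨t, rfl⟩ := Nat.exists_eq_add_of_lt hxy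
    have h9 : y + t + 1 - y = t + 1 := by omega
    rw [h9]
    have h10 : a * (t+1) + (a+b)*y = a * (y + t + 1) + b * y := by ring
    rw [h10]; exact he
  · rintro ⟨⟨a,x⟩,⟨b,y⟩⟩ hp
    rw [Finset.mem_filter] at hp
    obtain ⟨hps, hab⟩ := hp
    rw [mem_sol] at hps
    obtain ⟨⟨h1,h2,h3,h4⟩, he⟩ := hps
    simp only at hab ⊢
    rw [Finset.mem_filter]
    refine ⟨mem_sol.mpr ⟨⟨h1, by omega, by omega, h4⟩, ?_⟩, by simp; omega⟩
    obtain ⟨t, rfl⟩ := Nat.exists_eq_add_of_lt hab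
    have h9 : a + t + 1 - a = t + 1 := by omega
    rw [h9]
    have h10 : a * (x + y) + (t+1)*y = a * x + (a + t + 1) * y := by ring
    rw [h10]; exact he
  · rintro ⟨⟨a,x⟩,⟨b,y⟩⟩ hp
    rw [Finset.mem_filter] at hp
    obtain ⟨hps, hxy⟩ := hp
    rw [mem_sol] at hps
    obtain ⟨⟨h1,h2,h3,h4⟩, he⟩ := hps
    simp only at hxy ⊢
    have e1 : x - y + y = x := by omega
    have e2 : a + b - a = b := by omega
    rw [e1, e2]
  · rintro ⟨⟨a,x⟩,⟨b,y⟩⟩ hp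
    rw [Finset.mem_filter] at hp
    obtain ⟨hps, hab⟩ := hp
    rw [mem_sol] at hps
    obtain ⟨⟨h1,h2,h3,h4⟩, he⟩ := hps
    simp only at hab ⊢
    have e1 : x + y - y = x := by omega
    have e2 : a + (b - a) = b := by omega
    rw [e1, e2]
  · rintro ⟨⟨a,x⟩,⟨b,y⟩⟩ _
    simp only
    have e : a + b - a = b := by omega
    rw [e]

/-- Bijection 2 : region x < y maps to region b < a. -/
lemma sum_B2 (n : ℕ) (w : ℕ → ℕ → ℚ) :
    ∑ p ∈ (sol n).filter (fun p => p.1.2 < p.2.2), w p.1.1 p.2.1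
      = ∑ p ∈ (sol n).filter (fun p => p.2.1 < p.1.1), w (p.1.1 - p.2.1) p.2.1 := by
  refine Finset.sum_nbij'
    (fun p => ((p.1.1 + p.2.1, p.1.2), (p.2.1, p.2.2 - p.1.2)))
    (fun p => ((p.1.1 - p.2.1, p.1.2), (p.2.1, p.2.2 + p.1.2))) ?_ ?_ ?_ ?_ ?_
  · rintro ⟨⟨a,x⟩,⟨b,y⟩⟩ hp
    rw [Finset.mem_filter] at hp
    obtain ⟨hps, hxy⟩ := hp
    rw [mem_sol] at hps
    obtain ⟨⟨h1,h2,h3,h4⟩, he⟩ := hps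
    simp only at hxy ⊢
    rw [Finset.mem_filter]
    refine ⟨mem_sol.mpr ⟨⟨by omega, h2, h3, by omega⟩, ?_⟩, by simp; omega⟩
    obtain ⟨t, rfl⟩ := Nat.exists_eq_add_of_lt hxy
    have h9 : x + t + 1 - x = t + 1 := by omega
    rw [h9]
    have h10 : (a+b) * x + b*(t+1) = a * x + b * (x + t + 1) := by ring
    rw [h10]; exact he
  · rintro ⟨⟨a,x⟩,⟨b,y⟩⟩ hp
    rw [Finset.mem_filter] at hp
    obtain ⟨hps, hba⟩ := hp
    rw [mem_sol] at hps
    obtain ⟨⟨h1,h2,h3,h4⟩, he⟩ := hps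
    simp only at hba ⊢
    rw [Finset.mem_filter]
    refine ⟨mem_sol.mpr ⟨⟨by omega, h2, h3, by omega⟩, ?_⟩, by simp; omega⟩
    obtain ⟨t, rfl⟩ := Nat.exists_eq_add_of_lt hba
    have h9 : b + t + 1 - b = t + 1 := by omega
    rw [h9]
    have h10 : (t+1) * x + b * (y + x) = (b + t + 1) * x + b * y := by ring
    rw [h10]; exact he
  · rintro ⟨⟨a,x⟩,⟨b,y⟩⟩ hp
    simp only
    have e1 : a + b - b = a := by omega
    have e2 : y - x + x = y := by
      rw [Finset.mem_filter] at hp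
      exact Nat.sub_add_cancel (le_of_lt hp.2)
    rw [e1, e2]
  · rintro ⟨⟨a,x⟩,⟨b,y⟩⟩ hp
    simp only
    have e1 : a - b + b = a := by
      rw [Finset.mem_filter] at hp
      exact Nat.sub_add_cancel (le_of_lt hp.2)
    have e2 : y + x - x = y := by omega
    rw [e1, e2]
  · rintro ⟨⟨a,x⟩,⟨b,y⟩⟩ _
    simp only
    have e : a + b - b = a := by omega
    rw [e]

/-- Diagonal x = y : equals divisor double sum. -/
lemma sum_B3 (n : ℕ) (w : ℕ → ℕ → ℚ) :
    ∑ p ∈ (sol n).filter (fun p => p.1.2 = p.2.2), w p.1.1 p.2.1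
      = ∑ d ∈ n.divisors, ∑ a ∈ Ico 1 d, w a (d - a) := by
  rw [Finset.sum_sigma' n.divisors (fun d => Ico 1 d) (fun d a => w a (d - a))]
  refine Finset.sum_nbij'
    (fun p => (⟨p.1.1 + p.2.1, p.1.1⟩ : Σ _ : ℕ, ℕ))
    (fun s => ((s.2, n / s.1), (s.1 - s.2, n / s.1))) ?_ ?_ ?_ ?_ ?_
  · rintro ⟨⟨a,x⟩,⟨b,y⟩⟩ hp
    rw [Finset.mem_filter] at hp
    obtain ⟨hps, hxy⟩ := hp
    rw [mem_sol] at hps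
    obtain ⟨⟨h1,h2,h3,h4⟩, he⟩ := hps
    simp only at hxy
    subst hxy
    rw [Finset.mem_sigma]
    have hd : (a + b) * x = n := by rw [← he]; ring
    have hpos : 0 < a * x := Nat.mul_pos h1 h2
    constructor
    · rw [Nat.mem_divisors]
      refine ⟨⟨x, hd.symm⟩, by omega⟩
    · show a ∈ Ico 1 (a + b)
      rw [Finset.mem_Ico]; exact ⟨h1, by omega⟩
  · rintro ⟨d, a⟩ hs
    rw [Finset.mem_sigma] at hs
    obtain ⟨hd, ha⟩ := hs
    dsimp only at hd ha ⊢
    rw [Nat.mem_divisors] at hd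
    rw [Finset.mem_Ico] at ha
    obtain ⟨hdvd, hn0⟩ := hd
    obtain ⟨h1, h2⟩ := ha
    have hdn : d ≤ n := Nat.le_of_dvd (Nat.pos_of_ne_zero hn0) hdvd
    have hq : 1 ≤ n / d := (Nat.one_le_div_iff (by omega)).mpr hdn
    rw [Finset.mem_filter]
    refine ⟨mem_sol.mpr ⟨⟨h1, hq, by omega, hq⟩, ?_⟩, by simp⟩
    have h9 : a * (n/d) + (d - a) * (n/d) = (a + (d - a)) * (n/d) := by ring
    rw [h9]
    have h10 : a + (d - a) = d := by omega
    rw [h10, Nat.mul_div_cancel' hdvd]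
  · rintro ⟨⟨a,x⟩,⟨b,y⟩⟩ hp
    rw [Finset.mem_filter] at hp
    obtain ⟨hps, hxy⟩ := hp
    rw [mem_sol] at hps
    obtain ⟨⟨h1,h2,h3,h4⟩, he⟩ := hps
    simp only at hxy ⊢
    subst hxy
    have hd : (a + b) * x = n := by rw [← he]; ring
    have hx : n / (a + b) = x := by rw [← hd]; exact Nat.mul_div_cancel_left _ (by omega)
    have e2 : a + b - a = b := by omega
    rw [hx, e2]
  · rintro ⟨d, a⟩ hs
    rw [Finset.mem_sigma] at hs
    obtain ⟨_, ha⟩ := hs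
    dsimp only at ha ⊢
    rw [Finset.mem_Ico] at ha
    have e : a + (d - a) = d := by omega
    rw [e]
  · rintro ⟨⟨a,x⟩,⟨b,y⟩⟩ _
    simp only
    have e : a + b - a = b := by omega
    rw [e]


/-- Diagonal a = b : counted by divisors. -/
lemma sum_Ediag (n : ℕ) (w : ℕ → ℕ → ℚ) :
    ∑ p ∈ (sol n).filter (fun p => p.1.1 = p.2.1), w p.1.1 p.2.1
      = ∑ d ∈ n.divisors, (((n/d) - 1 : ℕ) : ℚ) * w d d := by
  have hrw : ∀ d ∈ n.divisors, (((n/d) - 1 : ℕ) : ℚ) * w d d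
      = ∑ _x ∈ Ico 1 (n/d), w d d := by
    intro d _
    rw [Finset.sum_const, Nat.card_Ico]
    simp [nsmul_eq_mul]
  rw [Finset.sum_congr rfl hrw,
    Finset.sum_sigma' n.divisors (fun d => Ico 1 (n/d)) (fun d _ => w d d)]
  refine Finset.sum_nbij'
    (fun p => (⟨p.1.1, p.1.2⟩ : Σ _ : ℕ, ℕ))
    (fun s => ((s.1, s.2), (s.1, n / s.1 - s.2))) ?_ ?_ ?_ ?_ ?_
  · rintro ⟨⟨a,x⟩,⟨b,y⟩⟩ hp
    rw [Finset.mem_filter] at hp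
    obtain ⟨hps, hab⟩ := hp
    rw [mem_sol] at hps
    obtain ⟨⟨h1,h2,h3,h4⟩, he⟩ := hps
    simp only at hab
    subst hab
    rw [Finset.mem_sigma]
    have hd : a * (x + y) = n := by rw [← he]; ring
    have hq : n / a = x + y := by rw [← hd]; exact Nat.mul_div_cancel_left _ (by omega)
    constructor
    · rw [Nat.mem_divisors]
      have hpos : 0 < a * x := Nat.mul_pos h1 h2
      refine ⟨⟨x + y, hd.symm⟩, by omega⟩
    · show x ∈ Ico 1 (n / a)
      rw [Finset.mem_Ico, hq]
      exact ⟨h2, by omega⟩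
  · rintro ⟨d, x⟩ hs
    rw [Finset.mem_sigma] at hs
    obtain ⟨hd, hx⟩ := hs
    dsimp only at hd hx ⊢
    rw [Nat.mem_divisors] at hd
    rw [Finset.mem_Ico] at hx
    obtain ⟨hdvd, hn0⟩ := hd
    obtain ⟨h1, h2⟩ := hx
    rw [Finset.mem_filter]
    refine ⟨mem_sol.mpr ⟨⟨?_, h1, ?_, by omega⟩, ?_⟩, by simp⟩
    · exact Nat.pos_of_dvd_of_pos hdvd (Nat.pos_of_ne_zero hn0)
    · exact Nat.pos_of_dvd_of_pos hdvd (Nat.pos_of_ne_zero hn0)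
    · have h9 : d * x + d * (n/d - x) = d * (x + (n/d - x)) := by ring
      rw [h9]
      have h10 : x + (n/d - x) = n/d := by omega
      rw [h10, Nat.mul_div_cancel' hdvd]
  · rintro ⟨⟨a,x⟩,⟨b,y⟩⟩ hp
    rw [Finset.mem_filter] at hp
    obtain ⟨hps, hab⟩ := hp
    rw [mem_sol] at hps
    obtain ⟨⟨h1,h2,h3,h4⟩, he⟩ := hps
    simp only at hab ⊢
    subst hab
    have hd : a * (x + y) = n := by rw [← he]; ring
    have hq : n / a = x + y := by rw [← hd]; exact Nat.mul_div_cancel_left _ (by omega)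
    rw [hq]
    have e : x + y - x = y := by omega
    rw [e]
  · rintro ⟨d, x⟩ _
    rfl
  · rintro ⟨⟨a,x⟩,⟨b,y⟩⟩ hp
    rw [Finset.mem_filter] at hp
    obtain ⟨_, hab⟩ := hp
    simp only at hab ⊢
    rw [hab]

/-- Link : sum over sol equals convolution of divisor sums. -/
lemma sum_link (n : ℕ) (w : ℕ → ℕ → ℚ) :
    ∑ p ∈ sol n, w p.1.1 p.2.1
      = ∑ m ∈ Ico 1 n, ∑ a ∈ m.divisors, ∑ b ∈ (n - m).divisors, w a b := by
  have hrw : ∀ m ∈ Ico 1 n, ∑ a ∈ m.divisors, ∑ b ∈ (n - m).divisors, w a b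
      = ∑ q ∈ m.divisors ×ˢ (n - m).divisors, w q.1 q.2 := by
    intro m _
    rw [Finset.sum_product]
  rw [Finset.sum_congr rfl hrw,
    Finset.sum_sigma' (Ico 1 n) (fun m => m.divisors ×ˢ (n - m).divisors) (fun _ q => w q.1 q.2)]
  refine Finset.sum_nbij'
    (fun p => (⟨p.1.1 * p.1.2, (p.1.1, p.2.1)⟩ : Σ _ : ℕ, ℕ × ℕ))
    (fun s => ((s.2.1, s.1 / s.2.1), (s.2.2, (n - s.1) / s.2.2))) ?_ ?_ ?_ ?_ ?_
  · rintro ⟨⟨a,x⟩,⟨b,y⟩⟩ hp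
    rw [mem_sol] at hp
    obtain ⟨⟨h1,h2,h3,h4⟩, he⟩ := hp
    have hax : 0 < a * x := Nat.mul_pos h1 h2
    have hby : 0 < b * y := Nat.mul_pos h3 h4
    rw [Finset.mem_sigma]
    constructor
    · show a * x ∈ Ico 1 n
      rw [Finset.mem_Ico]
      exact ⟨hax, by omega⟩
    · show (a, b) ∈ (a*x).divisors ×ˢ (n - a*x).divisors
      rw [Finset.mem_product, Nat.mem_divisors, Nat.mem_divisors]
      have hnm : n - a * x = b * y := by omega
      exact ⟨⟨⟨x, rfl⟩, by omega⟩, ⟨⟨y, by dsimp only; omega⟩, by omega⟩⟩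
  · rintro ⟨m, a, b⟩ hs
    rw [Finset.mem_sigma] at hs
    obtain ⟨hm, hab⟩ := hs
    dsimp only at hm hab ⊢
    rw [Finset.mem_Ico] at hm
    rw [Finset.mem_product, Nat.mem_divisors, Nat.mem_divisors] at hab
    obtain ⟨⟨hadvd, hm0⟩, ⟨hbdvd, hnm0⟩⟩ := hab
    have ha : 0 < a := Nat.pos_of_dvd_of_pos hadvd (Nat.pos_of_ne_zero hm0)
    have hb : 0 < b := Nat.pos_of_dvd_of_pos hbdvd (Nat.pos_of_ne_zero hnm0)
    rw [mem_sol]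
    refine ⟨⟨ha, ?_, hb, ?_⟩, ?_⟩
    · exact Nat.div_pos (Nat.le_of_dvd (Nat.pos_of_ne_zero hm0) hadvd) ha
    · exact Nat.div_pos (Nat.le_of_dvd (Nat.pos_of_ne_zero hnm0) hbdvd) hb
    · rw [Nat.mul_div_cancel' hadvd, Nat.mul_div_cancel' hbdvd]
      omega
  · rintro ⟨⟨a,x⟩,⟨b,y⟩⟩ hp
    rw [mem_sol] at hp
    obtain ⟨⟨h1,h2,h3,h4⟩, he⟩ := hp
    simp only
    have e1 : a * x / a = x := Nat.mul_div_cancel_left _ h1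
    have hnm : n - a * x = b * y := by omega
    rw [e1, hnm]
    have e2 : b * y / b = y := Nat.mul_div_cancel_left _ h3
    rw [e2]
  · rintro ⟨m, a, b⟩ hs
    rw [Finset.mem_sigma] at hs
    obtain ⟨hm, hab⟩ := hs
    dsimp only at hm hab ⊢
    rw [Finset.mem_product, Nat.mem_divisors, Nat.mem_divisors] at hab
    obtain ⟨⟨hadvd, hm0⟩, _⟩ := hab
    rw [Nat.mul_div_cancel' hadvd]
  · rintro ⟨⟨a,x⟩,⟨b,y⟩⟩ _
    rfl

lemma split3 {α : Type*} [DecidableEq α] (s : Finset α) (f : α → ℚ) (g h : α → ℕ) :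
    ∑ p ∈ s, f p = ∑ p ∈ s.filter (fun p => g p < h p), f p
      + ∑ p ∈ s.filter (fun p => g p = h p), f p
      + ∑ p ∈ s.filter (fun p => h p < g p), f p := by
  classical
  rw [← Finset.sum_filter_add_sum_filter_not s (fun p => g p < h p) f]
  have h2 := Finset.sum_filter_add_sum_filter_not (s.filter (fun p => ¬ g p < h p))
    (fun p => g p = h p) f
  rw [Finset.filter_filter, Finset.filter_filter] at h2
  have e1 : s.filter (fun p => ¬ g p < h p ∧ g p = h p) = s.filter (fun p => g p = h p) :=
    Finset.filter_congr (fun x _ => ⟨fun hh => hh.2, fun hh => ⟨by omega, hh⟩⟩)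
  have e2 : s.filter (fun p => ¬ g p < h p ∧ ¬ g p = h p) = s.filter (fun p => h p < g p) :=
    Finset.filter_congr (fun x _ => ⟨fun hh => by omega, fun hh => ⟨by omega, by omega⟩⟩)
  rw [e1, e2] at h2
  linarith

lemma master (n : ℕ) (w : ℕ → ℕ → ℚ) :
    ∑ p ∈ sol n, w p.1.1 p.2.1
      = ∑ p ∈ (sol n).filter (fun p => p.1.1 < p.2.1), w p.1.1 (p.2.1 - p.1.1)
      + ∑ p ∈ (sol n).filter (fun p => p.2.1 < p.1.1), w (p.1.1 - p.2.1) p.2.1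
      + ∑ d ∈ n.divisors, ∑ a ∈ Ico 1 d, w a (d - a) := by
  rw [split3 (sol n) (fun p => w p.1.1 p.2.1) (fun p => p.1.2) (fun p => p.2.2)]
  rw [sum_B2 n w, sum_B3 n w, sum_B1 n w]
  ring

lemma key (n : ℕ) (F G : ℕ → ℕ → ℚ)
    (h1 : ∀ a b : ℕ, a < b → F a b - F a (b - a) = G a b)
    (h2 : ∀ a b : ℕ, b < a → F a b - F (a - b) b = G a b) :
    ∑ m ∈ Ico 1 n, ∑ a ∈ m.divisors, ∑ b ∈ (n - m).divisors, G a b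
      = ∑ d ∈ n.divisors, ∑ a ∈ Ico 1 d, F a (d - a)
        - ∑ d ∈ n.divisors, (((n/d) - 1 : ℕ) : ℚ) * F d d
        + ∑ d ∈ n.divisors, (((n/d) - 1 : ℕ) : ℚ) * G d d := by
  have hM := master n F
  have hsplitF := split3 (sol n) (fun p => F p.1.1 p.2.1) (fun p => p.1.1) (fun p => p.2.1)
  have hsplitG := split3 (sol n) (fun p => G p.1.1 p.2.1) (fun p => p.1.1) (fun p => p.2.1)
  have hA : ∑ p ∈ (sol n).filter (fun p => p.1.1 < p.2.1), F p.1.1 p.2.1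
      - ∑ p ∈ (sol n).filter (fun p => p.1.1 < p.2.1), F p.1.1 (p.2.1 - p.1.1)
      = ∑ p ∈ (sol n).filter (fun p => p.1.1 < p.2.1), G p.1.1 p.2.1 := by
    rw [← Finset.sum_sub_distrib]
    refine Finset.sum_congr rfl ?_
    intro p hp
    rw [Finset.mem_filter] at hp
    exact h1 _ _ hp.2
  have hB : ∑ p ∈ (sol n).filter (fun p => p.2.1 < p.1.1), F p.1.1 p.2.1
      - ∑ p ∈ (sol n).filter (fun p => p.2.1 < p.1.1), F (p.1.1 - p.2.1) p.2.1
      = ∑ p ∈ (sol n).filter (fun p => p.2.1 < p.1.1), G p.1.1 p.2.1 := by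
    rw [← Finset.sum_sub_distrib]
    refine Finset.sum_congr rfl ?_
    intro p hp
    rw [Finset.mem_filter] at hp
    exact h2 _ _ hp.2
  have hEF := sum_Ediag n F
  have hEG := sum_Ediag n G
  have hlinkG := sum_link n G
  linarith


/-! ### Power sums -/

lemma psum1 (d : ℕ) : ∑ a ∈ range d, (a:ℚ)^1 = ((d:ℚ)^2 - d)/2 := by
  induction d with
  | zero => simp
  | succ m ih => rw [Finset.sum_range_succ, ih]; push_cast; ring

lemma psum2 (d : ℕ) : ∑ a ∈ range d, (a:ℚ)^2 = (2*(d:ℚ)^3 - 3*(d:ℚ)^2 + d)/6 := by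
  induction d with
  | zero => simp
  | succ m ih => rw [Finset.sum_range_succ, ih]; push_cast; ring

lemma psum3 (d : ℕ) : ∑ a ∈ range d, (a:ℚ)^3 = ((d:ℚ)^4 - 2*(d:ℚ)^3 + (d:ℚ)^2)/4 := by
  induction d with
  | zero => simp
  | succ m ih => rw [Finset.sum_range_succ, ih]; push_cast; ring

lemma psum4 (d : ℕ) : ∑ a ∈ range d, (a:ℚ)^4
    = (6*(d:ℚ)^5 - 15*(d:ℚ)^4 + 10*(d:ℚ)^3 - d)/30 := by
  induction d with
  | zero => simp
  | succ m ih => rw [Finset.sum_range_succ, ih]; push_cast; ring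

lemma psum5 (d : ℕ) : ∑ a ∈ range d, (a:ℚ)^5
    = (2*(d:ℚ)^6 - 6*(d:ℚ)^5 + 5*(d:ℚ)^4 - (d:ℚ)^2)/12 := by
  induction d with
  | zero => simp
  | succ m ih => rw [Finset.sum_range_succ, ih]; push_cast; ring

lemma psum6 (d : ℕ) : ∑ a ∈ range d, (a:ℚ)^6
    = (6*(d:ℚ)^7 - 21*(d:ℚ)^6 + 21*(d:ℚ)^5 - 7*(d:ℚ)^3 + d)/42 := by
  induction d with
  | zero => simp
  | succ m ih => rw [Finset.sum_range_succ, ih]; push_cast; ring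

lemma sum_Ico_pow (d t : ℕ) (ht : 1 ≤ t) :
    ∑ a ∈ Ico 1 d, (a:ℚ)^t = ∑ a ∈ range d, (a:ℚ)^t := by
  cases d with
  | zero => simp
  | succ m =>
    rw [Finset.range_eq_Ico, Finset.sum_eq_sum_Ico_succ_bot (Nat.succ_pos m)]
    rw [Nat.cast_zero, zero_pow (by omega : t ≠ 0), zero_add]

lemma sum_Ico_one (d : ℕ) (hd : 1 ≤ d) : ∑ _a ∈ Ico 1 d, (1:ℚ) = (d:ℚ) - 1 := by
  rw [Finset.sum_const, Nat.card_Ico, nsmul_eq_mul, mul_one, Nat.cast_sub hd, Nat.cast_one]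

/-! ### Faulhaber evaluations for the four magic polynomials -/

lemma fh2 (d : ℕ) (hd : 1 ≤ d) :
    ∑ a ∈ Ico 1 d, (((a:ℚ))^2 + (a:ℚ)*((d-a:ℕ):ℚ) + (((d-a:ℕ):ℚ))^2)
      = (5*(d:ℚ)^3 - 6*(d:ℚ)^2 + d)/6 := by
  have hc : ∀ a ∈ Ico 1 d, ((a:ℚ))^2 + (a:ℚ)*((d-a:ℕ):ℚ) + (((d-a:ℕ):ℚ))^2
      = (d:ℚ)^2 * 1 + (-(d:ℚ)) * (a:ℚ)^1 + 1 * (a:ℚ)^2 := by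
    intro a ha
    rw [Finset.mem_Ico] at ha
    rw [Nat.cast_sub (le_of_lt ha.2)]
    ring
  rw [Finset.sum_congr rfl hc, Finset.sum_add_distrib, Finset.sum_add_distrib,
    ← Finset.mul_sum, ← Finset.mul_sum, ← Finset.mul_sum, sum_Ico_one d hd,
    sum_Ico_pow d 1 (by omega), sum_Ico_pow d 2 (by omega), psum1, psum2]
  ring

lemma fh4 (d : ℕ) (hd : 1 ≤ d) :
    ∑ a ∈ Ico 1 d, (((a:ℚ))^2 + (a:ℚ)*((d-a:ℕ):ℚ) + (((d-a:ℕ):ℚ))^2)^2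
      = (21*(d:ℚ)^5 - 30*(d:ℚ)^4 + 10*(d:ℚ)^3 - d)/30 := by
  have hc : ∀ a ∈ Ico 1 d, (((a:ℚ))^2 + (a:ℚ)*((d-a:ℕ):ℚ) + (((d-a:ℕ):ℚ))^2)^2
      = (d:ℚ)^4 * 1 + (-2*(d:ℚ)^3) * (a:ℚ)^1 + (3*(d:ℚ)^2) * (a:ℚ)^2
        + (-2*(d:ℚ)) * (a:ℚ)^3 + 1 * (a:ℚ)^4 := by
    intro a ha
    rw [Finset.mem_Ico] at ha
    rw [Nat.cast_sub (le_of_lt ha.2)]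
    ring
  rw [Finset.sum_congr rfl hc, Finset.sum_add_distrib, Finset.sum_add_distrib,
    Finset.sum_add_distrib, Finset.sum_add_distrib,
    ← Finset.mul_sum, ← Finset.mul_sum, ← Finset.mul_sum, ← Finset.mul_sum, ← Finset.mul_sum,
    sum_Ico_one d hd, sum_Ico_pow d 1 (by omega), sum_Ico_pow d 2 (by omega),
    sum_Ico_pow d 3 (by omega), sum_Ico_pow d 4 (by omega), psum1, psum2, psum3, psum4]
  ring

lemma fh6 (d : ℕ) (hd : 1 ≤ d) :
    ∑ a ∈ Ico 1 d, (2*((a:ℚ))^6 + 2*(((d-a:ℕ):ℚ))^6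
        + 6*((a:ℚ)^5*((d-a:ℕ):ℚ) + (a:ℚ)*((d-a:ℕ):ℚ)^5)
        + 5*((a:ℚ)^4*((d-a:ℕ):ℚ)^2 + (a:ℚ)^2*((d-a:ℕ):ℚ)^4))
      = (20*(d:ℚ)^7 - 42*(d:ℚ)^6 + 21*(d:ℚ)^5 + d)/21 := by
  have hc : ∀ a ∈ Ico 1 d, (2*((a:ℚ))^6 + 2*(((d-a:ℕ):ℚ))^6
        + 6*((a:ℚ)^5*((d-a:ℕ):ℚ) + (a:ℚ)*((d-a:ℕ):ℚ)^5)
        + 5*((a:ℚ)^4*((d-a:ℕ):ℚ)^2 + (a:ℚ)^2*((d-a:ℕ):ℚ)^4))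
      = (2*(d:ℚ)^6) * 1 + (-6*(d:ℚ)^5) * (a:ℚ)^1 + (5*(d:ℚ)^4) * (a:ℚ)^2
        + (5*(d:ℚ)^2) * (a:ℚ)^4 + (-6*(d:ℚ)) * (a:ℚ)^5 + 2 * (a:ℚ)^6 := by
    intro a ha
    rw [Finset.mem_Ico] at ha
    rw [Nat.cast_sub (le_of_lt ha.2)]
    ring
  rw [Finset.sum_congr rfl hc, Finset.sum_add_distrib, Finset.sum_add_distrib,
    Finset.sum_add_distrib, Finset.sum_add_distrib, Finset.sum_add_distrib,
    ← Finset.mul_sum, ← Finset.mul_sum, ← Finset.mul_sum, ← Finset.mul_sum,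
    ← Finset.mul_sum, ← Finset.mul_sum,
    sum_Ico_one d hd, sum_Ico_pow d 1 (by omega), sum_Ico_pow d 2 (by omega),
    sum_Ico_pow d 4 (by omega), sum_Ico_pow d 5 (by omega), sum_Ico_pow d 6 (by omega),
    psum1, psum2, psum4, psum5, psum6]
  ring

lemma fh33 (d : ℕ) (hd : 1 ≤ d) :
    ∑ a ∈ Ico 1 d, ((a:ℚ)^4*((d-a:ℕ):ℚ)^2 + (a:ℚ)^2*((d-a:ℕ):ℚ)^4
        + 2*((a:ℚ)^3*((d-a:ℕ):ℚ)^3))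
      = ((d:ℚ)^7 - (d:ℚ)^3)/30 := by
  have hc : ∀ a ∈ Ico 1 d, ((a:ℚ)^4*((d-a:ℕ):ℚ)^2 + (a:ℚ)^2*((d-a:ℕ):ℚ)^4
        + 2*((a:ℚ)^3*((d-a:ℕ):ℚ)^3))
      = ((d:ℚ)^4) * (a:ℚ)^2 + (-2*(d:ℚ)^3) * (a:ℚ)^3 + ((d:ℚ)^2) * (a:ℚ)^4 := by
    intro a ha
    rw [Finset.mem_Ico] at ha
    rw [Nat.cast_sub (le_of_lt ha.2)]
    ring
  rw [Finset.sum_congr rfl hc, Finset.sum_add_distrib, Finset.sum_add_distrib,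
    ← Finset.mul_sum, ← Finset.mul_sum, ← Finset.mul_sum,
    sum_Ico_pow d 2 (by omega), sum_Ico_pow d 3 (by omega), sum_Ico_pow d 4 (by omega),
    psum2, psum3, psum4]
  ring


/-! ### Divisor sum conversions -/

lemma sigma_cast (j n : ℕ) : (sigma' j n : ℚ) = ∑ d ∈ n.divisors, (d:ℚ)^j := by
  unfold sigma'
  push_cast
  rfl

lemma divisor_poly (n : ℕ) (c1 c2 c3 c4 c5 c6 c7 : ℚ) :
    ∑ d ∈ n.divisors, (c1*(d:ℚ)^1 + c2*(d:ℚ)^2 + c3*(d:ℚ)^3 + c4*(d:ℚ)^4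
        + c5*(d:ℚ)^5 + c6*(d:ℚ)^6 + c7*(d:ℚ)^7)
      = c1*(sigma' 1 n:ℚ) + c2*(sigma' 2 n:ℚ) + c3*(sigma' 3 n:ℚ) + c4*(sigma' 4 n:ℚ)
        + c5*(sigma' 5 n:ℚ) + c6*(sigma' 6 n:ℚ) + c7*(sigma' 7 n:ℚ) := by
  rw [Finset.sum_add_distrib, Finset.sum_add_distrib, Finset.sum_add_distrib,
    Finset.sum_add_distrib, Finset.sum_add_distrib, Finset.sum_add_distrib,
    ← Finset.mul_sum, ← Finset.mul_sum, ← Finset.mul_sum, ← Finset.mul_sum,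
    ← Finset.mul_sum, ← Finset.mul_sum, ← Finset.mul_sum,
    sigma_cast 1, sigma_cast 2, sigma_cast 3, sigma_cast 4, sigma_cast 5,
    sigma_cast 6, sigma_cast 7]

lemma Ediv (n j : ℕ) (hj : 1 ≤ j) :
    ∑ d ∈ n.divisors, (((n/d) - 1 : ℕ):ℚ) * (d:ℚ)^j
      = (n:ℚ) * (sigma' (j-1) n : ℚ) - (sigma' j n : ℚ) := by
  obtain ⟨k, rfl⟩ : ∃ k, j = k + 1 := ⟨j - 1, by omega⟩
  have hk : k + 1 - 1 = k := by omega
  rw [hk]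
  have hpt : ∀ d ∈ n.divisors, (((n/d) - 1 : ℕ):ℚ) * (d:ℚ)^(k+1)
      = (n:ℚ)*(d:ℚ)^k - (d:ℚ)^(k+1) := by
    intro d hd
    rw [Nat.mem_divisors] at hd
    obtain ⟨hdvd, hn0⟩ := hd
    have hdpos : 0 < d := Nat.pos_of_dvd_of_pos hdvd (Nat.pos_of_ne_zero hn0)
    have hq1 : 1 ≤ n / d := Nat.div_pos (Nat.le_of_dvd (Nat.pos_of_ne_zero hn0) hdvd) hdpos
    have hcast : ((n/d : ℕ):ℚ) * (d:ℚ) = (n:ℚ) := by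
      rw [← Nat.cast_mul, Nat.div_mul_cancel hdvd]
    rw [Nat.cast_sub hq1, Nat.cast_one]
    linear_combination (d:ℚ)^k * hcast
  rw [Finset.sum_congr rfl hpt, Finset.sum_sub_distrib, ← Finset.mul_sum,
    ← sigma_cast, ← sigma_cast]

lemma conv_symm (n : ℕ) (f g : ℕ → ℚ) :
    ∑ m ∈ Ico 1 n, f m * g (n-m) = ∑ m ∈ Ico 1 n, g m * f (n-m) := by
  refine Finset.sum_nbij' (fun m => n - m) (fun m => n - m) ?_ ?_ ?_ ?_ ?_
  · intro m hm; rw [Finset.mem_Ico] at hm ⊢; omega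
  · intro m hm; rw [Finset.mem_Ico] at hm ⊢; omega
  · intro m hm; rw [Finset.mem_Ico] at hm; omega
  · intro m hm; rw [Finset.mem_Ico] at hm; omega
  · intro m hm
    rw [Finset.mem_Ico] at hm
    have e : n - (n - m) = m := by omega
    rw [e, mul_comm]

lemma inner_monomial (s t : Finset ℕ) (i j : ℕ) (c : ℚ) :
    ∑ a ∈ s, ∑ b ∈ t, c*(a:ℚ)^i*(b:ℚ)^j
      = c * ((∑ a ∈ s, (a:ℚ)^i) * (∑ b ∈ t, (b:ℚ)^j)) := by
  rw [Finset.sum_mul_sum, Finset.mul_sum]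
  refine Finset.sum_congr rfl ?_
  intro a _
  rw [Finset.mul_sum]
  refine Finset.sum_congr rfl ?_
  intro b _
  ring

/-! ### The convolution identity for σ₁ * σ₁ -/

lemma conv11 (n : ℕ) :
    12 * (∑ m ∈ Ico 1 n, (sigma' 1 m : ℚ) * (sigma' 1 (n-m) : ℚ))
      = 5*(sigma' 3 n : ℚ) + (sigma' 1 n : ℚ) - 6*(n:ℚ)*(sigma' 1 n : ℚ) := by
  have hkey := key n (fun a b => ((a:ℚ))^2 + (a:ℚ)*(b:ℚ) + ((b:ℚ))^2)
      (fun a b => 2*(a:ℚ)^1*(b:ℚ)^1) ?_ ?_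
  · have hL : ∑ m ∈ Ico 1 n, ∑ a ∈ m.divisors, ∑ b ∈ (n-m).divisors, 2*(a:ℚ)^1*(b:ℚ)^1
        = 2 * ∑ m ∈ Ico 1 n, (sigma' 1 m : ℚ) * (sigma' 1 (n-m) : ℚ) := by
      rw [Finset.mul_sum]
      refine Finset.sum_congr rfl ?_
      intro m _
      rw [inner_monomial, sigma_cast 1 m, sigma_cast 1 (n-m)]
    have hDS : ∑ d ∈ n.divisors, ∑ a ∈ Ico 1 d,
          (((a:ℚ))^2 + (a:ℚ)*((d - a:ℕ):ℚ) + (((d - a:ℕ):ℚ))^2)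
        = (1/6)*(sigma' 1 n:ℚ) + (-1)*(sigma' 2 n:ℚ) + (5/6)*(sigma' 3 n:ℚ)
          + 0*(sigma' 4 n:ℚ) + 0*(sigma' 5 n:ℚ) + 0*(sigma' 6 n:ℚ) + 0*(sigma' 7 n:ℚ) := by
      rw [← divisor_poly n (1/6) (-1) (5/6) 0 0 0 0]
      refine Finset.sum_congr rfl ?_
      intro d hd
      rw [fh2 d (Nat.pos_of_mem_divisors hd)]
      ring
    have hEF : ∑ d ∈ n.divisors, (((n/d) - 1 : ℕ):ℚ)
          * (((d:ℚ))^2 + (d:ℚ)*(d:ℚ) + ((d:ℚ))^2)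
        = 3 * ((n:ℚ) * (sigma' 1 n : ℚ) - (sigma' 2 n : ℚ)) := by
      have hpt : ∀ d ∈ n.divisors, (((n/d) - 1 : ℕ):ℚ) * (((d:ℚ))^2 + (d:ℚ)*(d:ℚ) + ((d:ℚ))^2)
          = 3 * ((((n/d) - 1 : ℕ):ℚ) * (d:ℚ)^2) := fun d _ => by ring
      rw [Finset.sum_congr rfl hpt, ← Finset.mul_sum]
      have h2 := Ediv n 2 (by omega)
      norm_num at h2
      rw [h2]
    have hEG : ∑ d ∈ n.divisors, (((n/d) - 1 : ℕ):ℚ) * (2*(d:ℚ)^1*(d:ℚ)^1)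
        = 2 * ((n:ℚ) * (sigma' 1 n : ℚ) - (sigma' 2 n : ℚ)) := by
      have hpt : ∀ d ∈ n.divisors, (((n/d) - 1 : ℕ):ℚ) * (2*(d:ℚ)^1*(d:ℚ)^1)
          = 2 * ((((n/d) - 1 : ℕ):ℚ) * (d:ℚ)^2) := fun d _ => by ring
      rw [Finset.sum_congr rfl hpt, ← Finset.mul_sum]
      have h2 := Ediv n 2 (by omega)
      norm_num at h2
      rw [h2]
    rw [hL, hDS, hEF, hEG] at hkey
    linarith
  · intro a b h
    rw [Nat.cast_sub (le_of_lt h)]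
    ring
  · intro a b h
    rw [Nat.cast_sub (le_of_lt h)]
    ring


lemma conv13 (n : ℕ) :
    240 * (∑ m ∈ Ico 1 n, (sigma' 1 m : ℚ) * (sigma' 3 (n-m) : ℚ))
      = 21*(sigma' 5 n : ℚ) + 10*(sigma' 3 n : ℚ) - (sigma' 1 n : ℚ)
        - 30*(n:ℚ)*(sigma' 3 n : ℚ) := by
  have hkey := key n (fun a b => (((a:ℚ))^2 + (a:ℚ)*(b:ℚ) + ((b:ℚ))^2)^2)
      (fun a b => 4*(a:ℚ)^3*(b:ℚ)^1 + 4*(a:ℚ)^1*(b:ℚ)^3) ?_ ?_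
  · have hL : ∑ m ∈ Ico 1 n, ∑ a ∈ m.divisors, ∑ b ∈ (n-m).divisors,
          (4*(a:ℚ)^3*(b:ℚ)^1 + 4*(a:ℚ)^1*(b:ℚ)^3)
        = 4 * ∑ m ∈ Ico 1 n, (sigma' 3 m : ℚ) * (sigma' 1 (n-m) : ℚ)
          + 4 * ∑ m ∈ Ico 1 n, (sigma' 1 m : ℚ) * (sigma' 3 (n-m) : ℚ) := by
      rw [Finset.mul_sum, Finset.mul_sum, ← Finset.sum_add_distrib]
      refine Finset.sum_congr rfl ?_
      intro m _
      rw [Finset.sum_congr rfl (fun a _ => Finset.sum_add_distrib), Finset.sum_add_distrib,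
        inner_monomial, inner_monomial, sigma_cast 3 m, sigma_cast 1 (n-m),
        sigma_cast 1 m, sigma_cast 3 (n-m)]
    have hDS : ∑ d ∈ n.divisors, ∑ a ∈ Ico 1 d,
          ((((a:ℚ))^2 + (a:ℚ)*((d - a:ℕ):ℚ) + (((d - a:ℕ):ℚ))^2)^2)
        = (-1/30)*(sigma' 1 n:ℚ) + 0*(sigma' 2 n:ℚ) + (1/3)*(sigma' 3 n:ℚ)
          + (-1)*(sigma' 4 n:ℚ) + (7/10)*(sigma' 5 n:ℚ) + 0*(sigma' 6 n:ℚ)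
          + 0*(sigma' 7 n:ℚ) := by
      rw [← divisor_poly n (-1/30) 0 (1/3) (-1) (7/10) 0 0]
      refine Finset.sum_congr rfl ?_
      intro d hd
      rw [fh4 d (Nat.pos_of_mem_divisors hd)]
      ring
    have hEF : ∑ d ∈ n.divisors, (((n/d) - 1 : ℕ):ℚ)
          * ((((d:ℚ))^2 + (d:ℚ)*(d:ℚ) + ((d:ℚ))^2)^2)
        = 9 * ((n:ℚ) * (sigma' 3 n : ℚ) - (sigma' 4 n : ℚ)) := by
      have hpt : ∀ d ∈ n.divisors, (((n/d) - 1 : ℕ):ℚ)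
          * ((((d:ℚ))^2 + (d:ℚ)*(d:ℚ) + ((d:ℚ))^2)^2)
          = 9 * ((((n/d) - 1 : ℕ):ℚ) * (d:ℚ)^4) := fun d _ => by ring
      rw [Finset.sum_congr rfl hpt, ← Finset.mul_sum]
      have h4 := Ediv n 4 (by omega)
      norm_num at h4
      rw [h4]
    have hEG : ∑ d ∈ n.divisors, (((n/d) - 1 : ℕ):ℚ)
          * (4*(d:ℚ)^3*(d:ℚ)^1 + 4*(d:ℚ)^1*(d:ℚ)^3)
        = 8 * ((n:ℚ) * (sigma' 3 n : ℚ) - (sigma' 4 n : ℚ)) := by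
      have hpt : ∀ d ∈ n.divisors, (((n/d) - 1 : ℕ):ℚ)
          * (4*(d:ℚ)^3*(d:ℚ)^1 + 4*(d:ℚ)^1*(d:ℚ)^3)
          = 8 * ((((n/d) - 1 : ℕ):ℚ) * (d:ℚ)^4) := fun d _ => by ring
      rw [Finset.sum_congr rfl hpt, ← Finset.mul_sum]
      have h4 := Ediv n 4 (by omega)
      norm_num at h4
      rw [h4]
    have hsym := conv_symm n (fun m => (sigma' 3 m : ℚ)) (fun m => (sigma' 1 m : ℚ))
    rw [hL, hDS, hEF, hEG] at hkey
    linarith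
  · intro a b h
    rw [Nat.cast_sub (le_of_lt h)]
    ring
  · intro a b h
    rw [Nat.cast_sub (le_of_lt h)]
    ring

lemma conv33 (n : ℕ) :
    120 * (∑ m ∈ Ico 1 n, (sigma' 3 m : ℚ) * (sigma' 3 (n-m) : ℚ))
      = (sigma' 7 n : ℚ) - (sigma' 3 n : ℚ) := by
  have hkey := key n
      (fun a b => ((a:ℚ)^4*(b:ℚ)^2 + (a:ℚ)^2*(b:ℚ)^4 + 2*((a:ℚ)^3*(b:ℚ)^3)))
      (fun a b => 4*(a:ℚ)^3*(b:ℚ)^3) ?_ ?_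
  · have hL : ∑ m ∈ Ico 1 n, ∑ a ∈ m.divisors, ∑ b ∈ (n-m).divisors,
          (4*(a:ℚ)^3*(b:ℚ)^3)
        = 4 * ∑ m ∈ Ico 1 n, (sigma' 3 m : ℚ) * (sigma' 3 (n-m) : ℚ) := by
      rw [Finset.mul_sum]
      refine Finset.sum_congr rfl ?_
      intro m _
      rw [inner_monomial, sigma_cast 3 m, sigma_cast 3 (n-m)]
    have hDS : ∑ d ∈ n.divisors, ∑ a ∈ Ico 1 d,
          ((a:ℚ)^4*((d - a:ℕ):ℚ)^2 + (a:ℚ)^2*((d - a:ℕ):ℚ)^4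
            + 2*((a:ℚ)^3*((d - a:ℕ):ℚ)^3))
        = 0*(sigma' 1 n:ℚ) + 0*(sigma' 2 n:ℚ) + (-1/30)*(sigma' 3 n:ℚ)
          + 0*(sigma' 4 n:ℚ) + 0*(sigma' 5 n:ℚ) + 0*(sigma' 6 n:ℚ)
          + (1/30)*(sigma' 7 n:ℚ) := by
      rw [← divisor_poly n 0 0 (-1/30) 0 0 0 (1/30)]
      refine Finset.sum_congr rfl ?_
      intro d hd
      rw [fh33 d (Nat.pos_of_mem_divisors hd)]
      ring
    have hEF : ∑ d ∈ n.divisors, (((n/d) - 1 : ℕ):ℚ)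
          * ((d:ℚ)^4*(d:ℚ)^2 + (d:ℚ)^2*(d:ℚ)^4 + 2*((d:ℚ)^3*(d:ℚ)^3))
        = 4 * ((n:ℚ) * (sigma' 5 n : ℚ) - (sigma' 6 n : ℚ)) := by
      have hpt : ∀ d ∈ n.divisors, (((n/d) - 1 : ℕ):ℚ)
          * ((d:ℚ)^4*(d:ℚ)^2 + (d:ℚ)^2*(d:ℚ)^4 + 2*((d:ℚ)^3*(d:ℚ)^3))
          = 4 * ((((n/d) - 1 : ℕ):ℚ) * (d:ℚ)^6) := fun d _ => by ring
      rw [Finset.sum_congr rfl hpt, ← Finset.mul_sum]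
      have h6 := Ediv n 6 (by omega)
      norm_num at h6
      rw [h6]
    have hEG : ∑ d ∈ n.divisors, (((n/d) - 1 : ℕ):ℚ) * (4*(d:ℚ)^3*(d:ℚ)^3)
        = 4 * ((n:ℚ) * (sigma' 5 n : ℚ) - (sigma' 6 n : ℚ)) := by
      have hpt : ∀ d ∈ n.divisors, (((n/d) - 1 : ℕ):ℚ) * (4*(d:ℚ)^3*(d:ℚ)^3)
          = 4 * ((((n/d) - 1 : ℕ):ℚ) * (d:ℚ)^6) := fun d _ => by ring
      rw [Finset.sum_congr rfl hpt, ← Finset.mul_sum]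
      have h6 := Ediv n 6 (by omega)
      norm_num at h6
      rw [h6]
    rw [hL, hDS, hEF, hEG] at hkey
    linarith
  · intro a b h
    rw [Nat.cast_sub (le_of_lt h)]
    ring
  · intro a b h
    rw [Nat.cast_sub (le_of_lt h)]
    ring

lemma conv15 (n : ℕ) :
    504 * (∑ m ∈ Ico 1 n, (sigma' 1 m : ℚ) * (sigma' 5 (n-m) : ℚ))
      = (sigma' 1 n : ℚ) + 21*(sigma' 5 n : ℚ) + 20*(sigma' 7 n : ℚ)
        - 42*(n:ℚ)*(sigma' 5 n : ℚ) := by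
  have hkey := key n
      (fun a b => 2*((a:ℚ))^6 + 2*((b:ℚ))^6 + 6*((a:ℚ)^5*(b:ℚ) + (a:ℚ)*((b:ℚ))^5)
        + 5*((a:ℚ)^4*((b:ℚ))^2 + (a:ℚ)^2*((b:ℚ))^4))
      (fun a b => 12*(a:ℚ)^5*(b:ℚ)^1 + 12*(a:ℚ)^1*(b:ℚ)^5) ?_ ?_
  · have hL : ∑ m ∈ Ico 1 n, ∑ a ∈ m.divisors, ∑ b ∈ (n-m).divisors,
          (12*(a:ℚ)^5*(b:ℚ)^1 + 12*(a:ℚ)^1*(b:ℚ)^5)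
        = 12 * ∑ m ∈ Ico 1 n, (sigma' 5 m : ℚ) * (sigma' 1 (n-m) : ℚ)
          + 12 * ∑ m ∈ Ico 1 n, (sigma' 1 m : ℚ) * (sigma' 5 (n-m) : ℚ) := by
      rw [Finset.mul_sum, Finset.mul_sum, ← Finset.sum_add_distrib]
      refine Finset.sum_congr rfl ?_
      intro m _
      rw [Finset.sum_congr rfl (fun a _ => Finset.sum_add_distrib), Finset.sum_add_distrib,
        inner_monomial, inner_monomial, sigma_cast 5 m, sigma_cast 1 (n-m),
        sigma_cast 1 m, sigma_cast 5 (n-m)]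
    have hDS : ∑ d ∈ n.divisors, ∑ a ∈ Ico 1 d,
          (2*((a:ℚ))^6 + 2*(((d - a:ℕ):ℚ))^6
            + 6*((a:ℚ)^5*((d - a:ℕ):ℚ) + (a:ℚ)*((d - a:ℕ):ℚ)^5)
            + 5*((a:ℚ)^4*((d - a:ℕ):ℚ)^2 + (a:ℚ)^2*((d - a:ℕ):ℚ)^4))
        = (1/21)*(sigma' 1 n:ℚ) + 0*(sigma' 2 n:ℚ) + 0*(sigma' 3 n:ℚ)
          + 0*(sigma' 4 n:ℚ) + 1*(sigma' 5 n:ℚ) + (-2)*(sigma' 6 n:ℚ)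
          + (20/21)*(sigma' 7 n:ℚ) := by
      rw [← divisor_poly n (1/21) 0 0 0 1 (-2) (20/21)]
      refine Finset.sum_congr rfl ?_
      intro d hd
      rw [fh6 d (Nat.pos_of_mem_divisors hd)]
      ring
    have hEF : ∑ d ∈ n.divisors, (((n/d) - 1 : ℕ):ℚ)
          * (2*((d:ℚ))^6 + 2*((d:ℚ))^6 + 6*((d:ℚ)^5*(d:ℚ) + (d:ℚ)*((d:ℚ))^5)
            + 5*((d:ℚ)^4*((d:ℚ))^2 + (d:ℚ)^2*((d:ℚ))^4))
        = 26 * ((n:ℚ) * (sigma' 5 n : ℚ) - (sigma' 6 n : ℚ)) := by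
      have hpt : ∀ d ∈ n.divisors, (((n/d) - 1 : ℕ):ℚ)
          * (2*((d:ℚ))^6 + 2*((d:ℚ))^6 + 6*((d:ℚ)^5*(d:ℚ) + (d:ℚ)*((d:ℚ))^5)
            + 5*((d:ℚ)^4*((d:ℚ))^2 + (d:ℚ)^2*((d:ℚ))^4))
          = 26 * ((((n/d) - 1 : ℕ):ℚ) * (d:ℚ)^6) := fun d _ => by ring
      rw [Finset.sum_congr rfl hpt, ← Finset.mul_sum]
      have h6 := Ediv n 6 (by omega)
      norm_num at h6
      rw [h6]
    have hEG : ∑ d ∈ n.divisors, (((n/d) - 1 : ℕ):ℚ)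
          * (12*(d:ℚ)^5*(d:ℚ)^1 + 12*(d:ℚ)^1*(d:ℚ)^5)
        = 24 * ((n:ℚ) * (sigma' 5 n : ℚ) - (sigma' 6 n : ℚ)) := by
      have hpt : ∀ d ∈ n.divisors, (((n/d) - 1 : ℕ):ℚ)
          * (12*(d:ℚ)^5*(d:ℚ)^1 + 12*(d:ℚ)^1*(d:ℚ)^5)
          = 24 * ((((n/d) - 1 : ℕ):ℚ) * (d:ℚ)^6) := fun d _ => by ring
      rw [Finset.sum_congr rfl hpt, ← Finset.mul_sum]
      have h6 := Ediv n 6 (by omega)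
      norm_num at h6
      rw [h6]
    have hsym := conv_symm n (fun m => (sigma' 5 m : ℚ)) (fun m => (sigma' 1 m : ℚ))
    rw [hL, hDS, hEF, hEG] at hkey
    linarith
  · intro a b h
    rw [Nat.cast_sub (le_of_lt h)]
    ring
  · intro a b h
    rw [Nat.cast_sub (le_of_lt h)]
    ring

end Liou


open Finset PowerSeries

noncomputable section AuxDq

@[simp] lemma coeff_Dq (f : PowerSeries ℚ) (n : ℕ) :
    coeff n (Dq f) = (n : ℚ) * coeff n f := by simp [Dq]

lemma Dq_add (f g : PowerSeries ℚ) : Dq (f + g) = Dq f + Dq g := by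
  ext n; simp [mul_add]

lemma Dq_sub (f g : PowerSeries ℚ) : Dq (f - g) = Dq f - Dq g := by
  ext n; simp [mul_sub]

lemma Dq_mul (f g : PowerSeries ℚ) : Dq (f * g) = Dq f * g + f * Dq g := by
  ext n
  simp only [coeff_Dq, map_add, coeff_mul]
  rw [Finset.mul_sum, ← Finset.sum_add_distrib]
  apply Finset.sum_congr rfl
  intro p hp
  replace hp : p.1 + p.2 = n := Finset.HasAntidiagonal.mem_antidiagonal.mp hp
  rw [← hp]; push_cast; ring

lemma Dq_C (c : ℚ) : Dq (C c) = 0 := by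
  ext n
  simp only [coeff_Dq, coeff_C, map_zero]
  rcases Nat.eq_zero_or_pos n with h | h
  · subst h; simp
  · rw [if_neg (by omega)]; ring

lemma Dq_one : Dq (1 : PowerSeries ℚ) = 0 := by
  have := Dq_C 1; rwa [map_one] at this

lemma Dq_C_mul (c : ℚ) (f : PowerSeries ℚ) : Dq (C c * f) = C c * Dq f := by
  rw [Dq_mul, Dq_C]; ring

lemma Dq_sq (f : PowerSeries ℚ) : Dq (f ^ 2) = 2 * f * Dq f := by
  rw [sq, Dq_mul]; ring

lemma Dq_cube (f : PowerSeries ℚ) : Dq (f ^ 3) = 3 * f ^ 2 * Dq f := by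
  rw [pow_succ, Dq_mul, Dq_sq]; ring

lemma Dq_X_pow (k : ℕ) : Dq ((X : PowerSeries ℚ) ^ k) = C (k : ℚ) * X ^ k := by
  ext n
  rw [coeff_Dq, coeff_C_mul, coeff_X_pow]
  split_ifs with h
  · subst h; ring
  · ring

lemma Dq_X_pow_mul (k : ℕ) (u : PowerSeries ℚ) :
    Dq (X ^ k * u) = X ^ k * (C (k : ℚ) * u + Dq u) := by
  rw [Dq_mul, Dq_X_pow]; ring

end AuxDq

section AuxCoeff

lemma coeff_E2_pos (m : ℕ) (hm : 1 ≤ m) : coeff m E2 = -24 * (sigma' 1 m : ℚ) := by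
  simp [E2, coeff_mk, Nat.one_le_iff_ne_zero.mp hm]

lemma coeff_E4_pos (m : ℕ) (hm : 1 ≤ m) : coeff m E4 = 240 * (sigma' 3 m : ℚ) := by
  simp [E4, coeff_mk, Nat.one_le_iff_ne_zero.mp hm]

lemma coeff_E6_pos (m : ℕ) (hm : 1 ≤ m) : coeff m E6 = -504 * (sigma' 5 m : ℚ) := by
  simp [E6, coeff_mk, Nat.one_le_iff_ne_zero.mp hm]

@[simp] lemma coeff_E2_zero : coeff 0 E2 = 1 := by simp [E2, coeff_mk]
@[simp] lemma coeff_E4_zero : coeff 0 E4 = 1 := by simp [E4, coeff_mk]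
@[simp] lemma coeff_E6_zero : coeff 0 E6 = 1 := by simp [E6, coeff_mk]

lemma coeff_mul_split (f g : PowerSeries ℚ) (n : ℕ) (hn : 1 ≤ n) :
    coeff n (f * g) = coeff 0 f * coeff n g
      + (∑ m ∈ Ico 1 n, coeff m f * coeff (n - m) g) + coeff n f * coeff 0 g := by
  rw [coeff_mul, Finset.Nat.sum_antidiagonal_eq_sum_range_succ_mk, Finset.sum_range_succ,
    Finset.range_eq_Ico, Finset.sum_eq_sum_Ico_succ_bot hn]
  norm_num

lemma midsum (n i j : ℕ) (ci cj : ℚ) (f g : PowerSeries ℚ)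
    (hf : ∀ m, 1 ≤ m → coeff m f = ci * (sigma' i m : ℚ))
    (hg : ∀ m, 1 ≤ m → coeff m g = cj * (sigma' j m : ℚ)) :
    ∑ m ∈ Ico 1 n, coeff m f * coeff (n - m) g
      = ci * cj * ∑ m ∈ Ico 1 n, (sigma' i m : ℚ) * (sigma' j (n - m) : ℚ) := by
  rw [Finset.mul_sum]
  refine Finset.sum_congr rfl ?_
  intro m hm
  rw [Finset.mem_Ico] at hm
  rw [hf m hm.1, hg (n - m) (by omega)]
  ring

lemma R2 : (12 : PowerSeries ℚ) * Dq E2 = E2 ^ 2 - E4 := by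
  ext n
  rcases Nat.eq_zero_or_pos n with h0 | hn
  · subst h0
    rw [← map_ofNat (C) 12, coeff_C_mul, sq, map_sub, coeff_mul]
    simp [coeff_Dq]
  · rw [← map_ofNat (C) 12, coeff_C_mul, coeff_Dq, map_sub, sq,
      coeff_mul_split E2 E2 n hn,
      midsum n 1 1 (-24) (-24) E2 E2 coeff_E2_pos coeff_E2_pos,
      coeff_E2_pos n hn, coeff_E4_pos n hn, coeff_E2_zero]
    have h := Liou.conv11 n
    linear_combination (-48 : ℚ) * h

lemma R4 : (3 : PowerSeries ℚ) * Dq E4 = E2 * E4 - E6 := by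
  ext n
  rcases Nat.eq_zero_or_pos n with h0 | hn
  · subst h0
    rw [← map_ofNat (C) 3, coeff_C_mul, map_sub, coeff_mul]
    simp [coeff_Dq]
  · rw [← map_ofNat (C) 3, coeff_C_mul, coeff_Dq, map_sub,
      coeff_mul_split E2 E4 n hn,
      midsum n 1 3 (-24) 240 E2 E4 coeff_E2_pos coeff_E4_pos,
      coeff_E2_pos n hn, coeff_E4_pos n hn, coeff_E6_pos n hn, coeff_E2_zero, coeff_E4_zero]
    have h := Liou.conv13 n
    linear_combination (24 : ℚ) * h

lemma R6 : (2 : PowerSeries ℚ) * Dq E6 = E2 * E6 - E4 ^ 2 := by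
  ext n
  rcases Nat.eq_zero_or_pos n with h0 | hn
  · subst h0
    rw [← map_ofNat (C) 2, coeff_C_mul, sq, map_sub, coeff_mul, coeff_mul]
    simp [coeff_Dq]
  · rw [← map_ofNat (C) 2, coeff_C_mul, coeff_Dq, map_sub, sq,
      coeff_mul_split E2 E6 n hn, coeff_mul_split E4 E4 n hn,
      midsum n 1 5 (-24) (-504) E2 E6 coeff_E2_pos coeff_E6_pos,
      midsum n 3 3 240 240 E4 E4 coeff_E4_pos coeff_E4_pos,
      coeff_E2_pos n hn, coeff_E4_pos n hn, coeff_E6_pos n hn, coeff_E2_zero,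
      coeff_E4_zero, coeff_E6_zero]
    have h15 := Liou.conv15 n
    have h33 := Liou.conv33 n
    linear_combination (-24 : ℚ) * h15 + (480 : ℚ) * h33

end AuxCoeff


section PartD
open PowerSeries

local notation "A" => PowerSeries ℚ

lemma C_ne_zero' {r : ℚ} (hr : r ≠ 0) : (C r : A) ≠ 0 := by
  intro h
  apply hr
  have := congrArg (constantCoeff) h
  simpa using this

lemma cancel_C {r : ℚ} (hr : r ≠ 0) {f : A} (h : C r * f = 0) : f = 0 := by
  rcases mul_eq_zero.mp h with h' | h'
  · exact absurd h' (C_ne_zero' hr)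
  · exact h'

lemma DqΔ : Dq Δ' = E2 * Δ' := by
  unfold Δ'
  rw [Dq_C_mul, Dq_sub, Dq_cube, Dq_sq]
  linear_combination (C (1/1728) * E4^2) * R4 - (C (1/1728) * E6) * R6

lemma hc1728 : (1728 : A) * C (1/1728) = 1 := by
  rw [← map_ofNat (C) 1728, ← map_mul]
  norm_num

lemma hc240 : (240 : A) * C (1/240) = 1 := by
  rw [← map_ofNat (C) 240, ← map_mul]
  norm_num

/-- `2 E4 E6' = 3 E6 E4' - 1728 Δ`. -/
lemma keyI : (2:A) * (E4 * Dq E6) = (3:A) * (E6 * Dq E4) - 1728 * Δ' := by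
  unfold Δ'
  linear_combination E4 * R6 - E6 * R4 + (E4^3 - E6^2) * hc1728

/-- Derivative of R4. -/
lemma dR4 : (3:A) * Dq (Dq E4) = Dq E2 * E4 + E2 * Dq E4 - Dq E6 := by
  have h := congrArg Dq R4
  rw [Dq_mul, Dq_sub, Dq_mul, show Dq (3:A) = 0 by rw [← map_ofNat (C) 3, Dq_C]] at h
  linear_combination h

/-- Derivative of R2. -/
lemma dR2 : (12:A) * Dq (Dq E2) = 2 * (E2 * Dq E2) - Dq E4 := by
  have h := congrArg Dq R2
  rw [Dq_mul, Dq_sub, Dq_sq, show Dq (12:A) = 0 by rw [← map_ofNat (C) 12, Dq_C]] at h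
  linear_combination h

/-- Derivative of R6. -/
lemma dR6 : (2:A) * Dq (Dq E6) = Dq E2 * E6 + E2 * Dq E6 - 2 * (E4 * Dq E4) := by
  have h := congrArg Dq R6
  rw [Dq_mul, Dq_sub, Dq_mul, Dq_sq, show Dq (2:A) = 0 by rw [← map_ofNat (C) 2, Dq_C]] at h
  linear_combination h

/-- scaled Kaneko–Koike first-order relation -/
def Qstat (k : ℕ) : Prop :=
  (4:A) * (E4 * Dq (g (k+1))) - (6 * C (k:ℚ) + 5) * (Dq E4 * g (k+1))
    + 4 * ((C (k:ℚ) + 1) * C (μ k)) * (Δ' * g k) = 0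

/-- scaled Kaneko–Zagier differential equation -/
def Pstat (k : ℕ) : Prop :=
  (2:A) * Dq (Dq (g k)) - 2 * C (k:ℚ) * (E2 * Dq (g k))
    + (C (k:ℚ) * (6 * C (k:ℚ) - 1)) * (Dq E2 * g k) = 0

lemma hDD4 : (36:A) * (E4 * Dq (Dq E4))
    = 5*(E2^2*E4^2) + 5*(E4^3) - 10*(E2*(E4*E6)) := by
  linear_combination 12*E4*dR4 + E4^2*R2 + 4*(E2*E4)*R4 - 6*E4*R6

lemma hD4sq : (9:A) * (Dq E4)^2 = (E2*E4 - E6)^2 := by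
  linear_combination (3*Dq E4 + E2*E4 - E6) * R4

lemma hsc : (20:A) * C (1/240) = (144:A) * C (1/1728) := by
  rw [← map_ofNat (C) 20, ← map_ofNat (C) 144, ← map_mul, ← map_mul]
  norm_num

lemma Qstat0 : Qstat 0 := by
  unfold Qstat
  rw [show g 1 = C (1/240) * Dq E4 from rfl, show g 0 = (1:A) from rfl,
    show μ 0 = (-1 : ℚ) from rfl, Dq_C_mul]
  apply cancel_C (show (36:ℚ) ≠ 0 by norm_num)
  rw [show (C (36:ℚ) : A) = (36:A) from map_ofNat (C) 36]
  unfold Δ'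
  simp only [Nat.cast_zero, map_zero, map_neg, map_one]
  linear_combination 4*(C (1/240))*hDD4 - 20*(C (1/240))*hD4sq
    + (E4^3-E6^2)*hsc

lemma Dq_X : Dq (X : A) = X := by
  ext n
  simp only [coeff_Dq, coeff_X]
  split_ifs with h
  · subst h; norm_num
  · simp

lemma Dq_zero : Dq (0 : A) = 0 := by ext n; simp

/-- second derivative of R4 -/
lemma ddR4 : (3:A) * Dq (Dq (Dq E4))
    = Dq (Dq E2) * E4 + 2*(Dq E2 * Dq E4) + E2 * Dq (Dq E4) - Dq (Dq E6) := by
  have h := congrArg Dq dR4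
  rw [Dq_mul, Dq_sub, Dq_add, Dq_mul, Dq_mul,
    show Dq (3:A) = 0 by rw [← map_ofNat (C) 3, Dq_C]] at h
  linear_combination h

lemma Pstat0 : Pstat 0 := by
  unfold Pstat
  rw [show g 0 = (1:A) from rfl, Dq_one, Dq_zero]
  simp

lemma Z36 : 2*Dq (Dq (Dq E4)) - 2*(E2*Dq (Dq E4)) + 5*(Dq E2*Dq E4) = 0 := by
  apply cancel_C (show (36:ℚ) ≠ 0 by norm_num)
  rw [show (C (36:ℚ) : A) = (36:A) from map_ofNat (C) 36]
  linear_combination 24*ddR4 + 2*E4*dR2 - 12*dR6 - 16*E2*dR4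
    + (-(E2*E4) - E6 + 19*Dq E4)*R2 + (E2^2+E4)*R4 + 2*E2*R6

lemma Pstat1 : Pstat 1 := by
  unfold Pstat
  rw [show g 1 = C (1/240) * Dq E4 from rfl, Dq_C_mul, Dq_C_mul]
  simp only [Nat.cast_one, map_one]
  linear_combination (C (1/240)) * Z36

lemma Qstat1 : Qstat 1 := by
  have hQ0 := Qstat0
  unfold Qstat at hQ0 ⊢
  simp only [Nat.cast_zero, Nat.cast_one, map_zero, map_one] at hQ0 ⊢
  rw [show g 1 = C (1/240) * Dq E4 from rfl, show g 0 = (1:A) from rfl,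
    show μ 0 = (-1:ℚ) from rfl, Dq_C_mul] at hQ0
  simp only [map_neg, map_one] at hQ0
  have hg2 : g 2 = E6 * (C (1/240) * Dq E4) - Δ' := by
    rw [show g 2 = E6 * g 1 + C (μ 0) * (Δ' * g 0) from rfl,
      show g 1 = C (1/240) * Dq E4 from rfl, show g 0 = (1:A) from rfl,
      show μ 0 = (-1:ℚ) from rfl]
    simp only [map_neg, map_one]
    ring
  have hDg2 := congrArg Dq hg2
  rw [Dq_sub, Dq_mul, Dq_C_mul, DqΔ] at hDg2
  rw [show (1:ℕ)+1 = 2 from rfl, show μ 1 = (462:ℚ) by norm_num [μ], hDg2, hg2,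
    show g 1 = C (1/240) * Dq E4 from rfl,
    show (C (462:ℚ) : A) = (462:A) from map_ofNat (C) 462]
  linear_combination E6 * hQ0 + 2*(C (1/240))*(Dq E4)*keyI + 4*Δ'*R4
    + (Dq E4 * Δ')*hc240

lemma mu_rel (m : ℕ) : ((m:ℚ)+3)*μ (m+2) = ((m:ℚ)+1)*μ (m+1) + 864 := by
  have h1 : (m:ℚ)+1 ≠ 0 := by positivity
  have h2 : (m:ℚ)+2 ≠ 0 := by positivity
  have h3 : (m:ℚ)+3 ≠ 0 := by positivity
  rw [show μ (m+2) = 12*(6*((m:ℚ)+2)+1)*(6*((m:ℚ)+2)+5)/(((m:ℚ)+2)*(((m:ℚ)+2)+1)) by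
      rw [μ, if_neg (by omega)]; push_cast; ring_nf,
    show μ (m+1) = 12*(6*((m:ℚ)+1)+1)*(6*((m:ℚ)+1)+5)/(((m:ℚ)+1)*(((m:ℚ)+1)+1)) by
      rw [μ, if_neg (by omega)]; push_cast; ring_nf]
  field_simp
  ring

lemma hS1lift (m : ℕ) : (C (m:ℚ) + 3) * C (μ (m+2))
    = (C (m:ℚ) + 1) * C (μ (m+1)) + 864 := by
  rw [show ((3:A)) = C (3:ℚ) from (map_ofNat _ _).symm,
    show ((864:A)) = C (864:ℚ) from (map_ofNat _ _).symm,
    show ((1:A)) = C (1:ℚ) from (map_one (C)).symm,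
    ← map_add, ← map_add, ← map_mul, ← map_mul, ← map_add]
  exact congrArg (C) (mu_rel m)

lemma Qstep (m : ℕ) (hQ0 : Qstat m) (hQ1 : Qstat (m+1)) : Qstat (m+2) := by
  unfold Qstat at hQ0 hQ1 ⊢
  push_cast at hQ1 ⊢
  have hC1 : C ((m:ℚ)+1) = C (m:ℚ) + 1 := by rw [map_add, map_one]
  have hC2 : C ((m:ℚ)+2) = C (m:ℚ) + 2 := by rw [map_add, map_ofNat]
  rw [hC1] at hQ1
  rw [hC2]
  rw [show m+1+1 = m+2 from rfl] at hQ1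
  have hg3 : g (m+2+1) = E6 * g (m+2) + C (μ (m+1)) * (Δ' * g (m+1)) := rfl
  have hg2 : g (m+2) = E6 * g (m+1) + C (μ m) * (Δ' * g m) := rfl
  have hDg3 := congrArg Dq hg3
  rw [Dq_add, Dq_mul, Dq_C_mul, Dq_mul, DqΔ] at hDg3
  rw [hDg3, hg3]
  linear_combination E6 * hQ1 + (C (μ (m+1)) * Δ') * hQ0
    + (2 * g (m+2)) * keyI
    - (4 * C (μ (m+1)) * (Δ' * g (m+1))) * R4
    + (4 * (Δ' * g (m+1)) * E6 + 4 * C (μ m) * (Δ' * (Δ' * g m))) * hS1lift m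
    - (3456 * Δ') * hg2
    + ((4 * C (m:ℚ) + 12) * C (μ (m+2)) * Δ') * hg2

lemma Pstep (m : ℕ) (hP0 : Pstat m) (hP1 : Pstat (m+1)) (hQ0 : Qstat m) :
    Pstat (m+2) := by
  unfold Pstat at hP0 hP1 ⊢
  unfold Qstat at hQ0
  push_cast at hP1 ⊢
  have hC1 : C ((m:ℚ)+1) = C (m:ℚ) + 1 := by rw [map_add, map_one]
  have hC2 : C ((m:ℚ)+2) = C (m:ℚ) + 2 := by rw [map_add, map_ofNat]
  rw [hC1] at hP1
  rw [hC2]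
  have hg2 : g (m+2) = E6 * g (m+1) + C (μ m) * (Δ' * g m) := rfl
  have hDg2 := congrArg Dq hg2
  rw [Dq_add, Dq_mul, Dq_C_mul, Dq_mul, DqΔ] at hDg2
  have hDDg2 := congrArg Dq hDg2
  rw [Dq_add, Dq_add, Dq_mul, Dq_mul, Dq_C_mul, Dq_add, Dq_mul, Dq_mul, Dq_mul, DqΔ] at hDDg2
  apply cancel_C (show (2:ℚ) ≠ 0 by norm_num)
  rw [show (C (2:ℚ) : A) = (2:A) from map_ofNat (C) 2]
  rw [hDDg2, hDg2, hg2]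
  linear_combination 2*E6*hP1 + 2*(C (μ m)*Δ')*hP0 + 2*(g (m+1))*dR6
    + 4*(Dq (g (m+1)))*R6
    - ((2*C (m:ℚ)+3)*E2*(g (m+1)))*R6
    + ((2*C (m:ℚ)+3)*E6*(g (m+1)))*R2
    - ((2*C (m:ℚ)+3)*E4*(g (m+1)))*R4
    + ((4*C (m:ℚ)+4)*(C (μ m)*(Δ'*g m)))*R2
    - E4*hQ0

lemma Qall : ∀ k, Qstat k := by
  have H : ∀ k, Qstat k ∧ Qstat (k+1) := by
    intro k
    induction k with
    | zero => exact ⟨Qstat0, Qstat1⟩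
    | succ m ih => exact ⟨ih.2, Qstep m ih.1 ih.2⟩
  exact fun k => (H k).1

lemma Pall : ∀ k, Pstat k := by
  have H : ∀ k, Pstat k ∧ Pstat (k+1) := by
    intro k
    induction k with
    | zero => exact ⟨Pstat0, Pstat1⟩
    | succ m ih => exact ⟨ih.2, Pstep m ih.1 ih.2 (Qall m)⟩
  exact fun k => (H k).1

lemma Xne0 : (X : A) ≠ 0 := by
  intro h
  have := congrArg (coeff 1) h
  simp [coeff_X] at this

lemma pow_deriv (E : A) (T : A) (h : 2*Dq T = (1-E)*T) :
    ∀ k : ℕ, 2*Dq (T^k) = C (k:ℚ) * ((1-E)*T^k) := by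
  intro k
  induction k with
  | zero => simp [pow_zero, Dq_one]
  | succ m ih =>
    rw [pow_succ, Dq_mul]
    push_cast
    rw [map_add, map_one]
    linear_combination T*ih + T^m*h

end PartD

/-- writing `g(k) = q^k·u` and `φ = u·S⁻ᵏ`, one has
`D²(φ) + k·D(φ) = (k²/4)·(E₄ − 1)·φ`, i.e.
`D²(f_{1,6k}·Δ^{−k/2}) = (k²/4)·E₄·(f_{1,6k}·Δ^{−k/2})` after factoring out `q^{k/2}`. -/
theorem ode_weight_6k_conjugated (k : ℕ) (hk : 1 ≤ k) (u S : PowerSeries ℚ)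
    (hu : g k = PowerSeries.X ^ k * u)
    (hS1 : PowerSeries.constantCoeff S = 1)
    (hS2 : PowerSeries.X * S ^ 2 = Δ') :
    Dq (Dq (u * (S⁻¹) ^ k)) + PowerSeries.C (k:ℚ) * Dq (u * (S⁻¹) ^ k)
      = PowerSeries.C ((k:ℚ)^2/4) * ((E4 - 1) * (u * (S⁻¹) ^ k)) := by
  set T := S⁻¹ with hTdef
  have hSne : S ≠ 0 := fun h => by rw [h] at hS1; simp at hS1
  have hT : S * T = 1 := PowerSeries.mul_inv_cancel S (by rw [hS1]; norm_num)
  have hd := congrArg Dq hS2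
  rw [Dq_mul, Dq_sq, Dq_X, DqΔ, ← hS2] at hd
  have h2 : PowerSeries.X * (S*S + 2*(S*Dq S)) = PowerSeries.X * (E2*(S*S)) := by
    linear_combination hd
  have h3 := mul_left_cancel₀ Xne0 h2
  have h4 : S * (S + 2*Dq S) = S * (E2*S) := by linear_combination h3
  have h5 := mul_left_cancel₀ hSne h4
  have hdT := congrArg Dq hT
  rw [Dq_mul, Dq_one] at hdT
  have h6 : S * (2*Dq T) = S * ((1 - E2)*T) := by linear_combination 2*hdT - T*h5
  have h7 := mul_left_cancel₀ hSne h6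
  have hW := pow_deriv E2 T h7 k
  have hP := Pall k
  unfold Pstat at hP
  rw [hu, Dq_X_pow_mul] at hP
  have hDDgk : Dq (PowerSeries.X^k * (PowerSeries.C (k:ℚ) * u + Dq u))
      = PowerSeries.X^k * (PowerSeries.C (k:ℚ) * (PowerSeries.C (k:ℚ) * u + Dq u)
        + (PowerSeries.C (k:ℚ) * Dq u + Dq (Dq u))) := by
    rw [Dq_X_pow_mul, Dq_add, Dq_C_mul]
  rw [hDDgk] at hP
  have hXfact : (PowerSeries.X:PowerSeries ℚ)^k
      * (2 * (PowerSeries.C (k:ℚ) * (PowerSeries.C (k:ℚ) * u + Dq u)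
          + (PowerSeries.C (k:ℚ) * Dq u + Dq (Dq u)))
        - 2 * PowerSeries.C (k:ℚ) * (E2 * (PowerSeries.C (k:ℚ) * u + Dq u))
        + (PowerSeries.C (k:ℚ) * (6 * PowerSeries.C (k:ℚ) - 1)) * (Dq E2 * u)) = 0 := by
    linear_combination hP
  have hstar := (mul_eq_zero.mp hXfact).resolve_left (pow_ne_zero k Xne0)
  have hφ1 : Dq (u * T^k) = Dq u * T^k + u * Dq (T^k) := Dq_mul u (T^k)
  have hφ2 : Dq (Dq (u * T^k))
      = Dq (Dq u) * T^k + Dq u * Dq (T^k) + (Dq u * Dq (T^k) + u * Dq (Dq (T^k))) := by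
    conv_lhs => rw [hφ1]
    rw [Dq_add, Dq_mul, Dq_mul]
  have hDW := congrArg Dq hW
  rw [Dq_mul, show Dq (2:PowerSeries ℚ) = 0 by rw [← map_ofNat (C) 2, Dq_C],
    Dq_C_mul, Dq_mul, Dq_sub, Dq_one] at hDW
  have hck2 : (4:PowerSeries ℚ) * PowerSeries.C ((k:ℚ)^2/4)
      = PowerSeries.C (k:ℚ) * PowerSeries.C (k:ℚ) := by
    rw [show ((4:PowerSeries ℚ)) = C (4:ℚ) from (map_ofNat _ _).symm, ← map_mul, ← map_mul]
    exact congrArg (C) (by ring)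
  have hmain : (PowerSeries.C (4:ℚ)) * (Dq (Dq (u * T^k)) + PowerSeries.C (k:ℚ) * Dq (u * T^k)
      - PowerSeries.C ((k:ℚ)^2/4) * ((E4 - 1) * (u * T^k))) = 0 := by
    rw [show (C (4:ℚ) : PowerSeries ℚ) = (4:PowerSeries ℚ) from map_ofNat _ _]
    rw [hφ2, hφ1]
    linear_combination 2*(T^k)*hstar
      + (4*Dq u + 2*PowerSeries.C (k:ℚ)*u + PowerSeries.C (k:ℚ)*u*(1-E2))*hW + 2*u*hDW
      - (PowerSeries.C (k:ℚ)^2*(u*T^k))*R2 - ((E4-1)*(u*T^k))*hck2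
  have hz := cancel_C (show (4:ℚ) ≠ 0 by norm_num) hmain
  linear_combination hz
end

section
/- Let k ∈ ℕ and μ ∈ ℚ, and set B := q·Φ_{k+2} + μ·(E₆·S⁻¹·Φ_{k+1} − Φ_k) ∈ ℚ[[q]]. Then the constant coefficient of B is 0, and the coefficient of q in B is 0 if and only if μ·12(6k+5)(6k+13) = (k+1)(k+2), i.e. if and only if μ = (μ*_{k+1})⁻¹ where μ*_{k+1} = 12(6k+5)(6k+13)/((k+1)(k+2)). -/
open PowerSeries

noncomputable section

/-- `A_k = (k²/4 − 1/12)·E₄ + (1/12)·E₆²·E₄⁻²`. -/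
def A (k : ℕ) : PowerSeries ℚ :=
  PowerSeries.C ((k:ℚ)^2/4 - 1/12) * E4 + PowerSeries.C (1/12) * E6^2 * (E4⁻¹)^2

/-- The coefficients `α_k(n)`: `α_k(0) = 1` and
`α_k(n) = (1/(n(n+k)))·∑_{m=1}^{n} a_m·α_k(n−m)` where `a_m` is the `m`-th coefficient of `A_k`. -/
def α (k : ℕ) : ℕ → ℚ
  | 0 => 1
  | (n+1) => (1 / (((n:ℚ)+1) * ((n:ℚ)+1+(k:ℚ)))) *
      ∑ i ∈ Finset.range (n+1), (PowerSeries.coeff (i+1) (A k)) * α k (n - i)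
  decreasing_by exact Nat.lt_succ_of_le (Nat.sub_le n i)

/-- `Φ_k = ∑_{n≥0} α_k(n)qⁿ`. -/
def Φ (k : ℕ) : PowerSeries ℚ := PowerSeries.mk fun n => α k n

end


lemma cc_E4 : PowerSeries.constantCoeff E4 = 1 := by simp [E4]
lemma cc_E6 : PowerSeries.constantCoeff E6 = 1 := by simp [E6]
lemma c1_E4 : PowerSeries.coeff 1 E4 = 240 := by
  simp [E4, sigma']
lemma c2_E4 : PowerSeries.coeff 2 E4 = 2160 := by
  simp [E4, sigma']; norm_num [show (2:ℕ).divisors = {1, 2} from by decide]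
lemma c1_E6 : PowerSeries.coeff 1 E6 = -504 := by
  simp [E6, sigma']
lemma c2_E6 : PowerSeries.coeff 2 E6 = -16632 := by
  simp [E6, sigma']; norm_num [show (2:ℕ).divisors = {1, 2} from by decide]
lemma c1_E4inv : PowerSeries.coeff 1 (E4⁻¹) = -240 := by
  have h : E4 * E4⁻¹ = 1 := PowerSeries.mul_inv_cancel _ (by rw [cc_E4]; norm_num)
  have := congrArg (PowerSeries.coeff 1) h
  rw [PowerSeries.coeff_one_mul] at this
  simp [c1_E4, cc_E4] at this
  linarith

lemma c1_A (k : ℕ) : PowerSeries.coeff 1 (A k) = 60 * (k:ℚ)^2 - 144 := by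
  simp only [A, map_add, PowerSeries.coeff_C_mul, mul_assoc]
  rw [PowerSeries.coeff_one_mul, PowerSeries.coeff_one_pow, PowerSeries.coeff_one_pow]
  simp [c1_E4, c1_E6, cc_E4, cc_E6, c1_E4inv]
  ring

lemma alpha_one (k : ℕ) : α k 1 = (60 * (k:ℚ)^2 - 144) / ((k:ℚ) + 1) := by
  rw [show (1:ℕ) = 0 + 1 from rfl, α]
  simp [c1_A, α]
  ring
lemma coeff_two_mul (φ ψ : PowerSeries ℚ) : PowerSeries.coeff 2 (φ * ψ) =
    PowerSeries.constantCoeff φ * PowerSeries.coeff 2 ψ +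
    PowerSeries.coeff 1 φ * PowerSeries.coeff 1 ψ +
    PowerSeries.coeff 2 φ * PowerSeries.constantCoeff ψ := by
  rw [PowerSeries.coeff_mul, show Finset.HasAntidiagonal.antidiagonal (2:ℕ) = ({(0,2),(1,1),(2,0)} : Finset (ℕ × ℕ)) from rfl]
  rw [Finset.sum_insert (by decide), Finset.sum_insert (by decide), Finset.sum_singleton]
  simp [PowerSeries.coeff_zero_eq_constantCoeff]
  ring

lemma c2_Delta : PowerSeries.coeff 2 Δ' = -24 := by
  have h43 : PowerSeries.coeff 2 (E4 ^ 3) = 179280 := by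
    rw [pow_succ, coeff_two_mul, sq E4, coeff_two_mul, PowerSeries.coeff_one_mul]
    simp [c1_E4, c2_E4, cc_E4]
    norm_num
  have h62 : PowerSeries.coeff 2 (E6 ^ 2) = 220752 := by
    rw [sq E6, coeff_two_mul]
    simp [c1_E6, c2_E6, cc_E6]
    norm_num
  simp [Δ', h43, h62]
  norm_num
/-- for `B = q·Φ_{k+2} + μ·(E₆·S⁻¹·Φ_{k+1} − Φ_k)` the constant coefficient of
`B` vanishes, and the coefficient of `q` in `B` vanishes iff
`μ·12(6k+5)(6k+13) = (k+1)(k+2)`, i.e. iff `μ = (μ*_{k+1})⁻¹`. -/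
theorem first_coefficients_of_B (S : PowerSeries ℚ)
    (hS1 : PowerSeries.constantCoeff S = 1)
    (hS2 : PowerSeries.X * S ^ 2 = Δ') (k : ℕ) (m : ℚ) :
    PowerSeries.coeff 0
        (PowerSeries.X * Φ (k+2) + PowerSeries.C m * (E6 * S⁻¹ * Φ (k+1) - Φ k)) = 0 ∧
    (PowerSeries.coeff 1
        (PowerSeries.X * Φ (k+2) + PowerSeries.C m * (E6 * S⁻¹ * Φ (k+1) - Φ k)) = 0
      ↔ m * (12 * (6*(k:ℚ)+5) * (6*(k:ℚ)+13)) = ((k:ℚ)+1) * ((k:ℚ)+2)) := by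
  have hccΦ : ∀ j, PowerSeries.constantCoeff (Φ j) = 1 := by
    intro j; simp [Φ, α]
  have hc1Φ : ∀ j, PowerSeries.coeff 1 (Φ j) = α j 1 := by
    intro j; simp [Φ]
  have hccSinv : PowerSeries.constantCoeff (S⁻¹) = 1 := by
    rw [PowerSeries.constantCoeff_inv, hS1]; norm_num
  have hc1S : PowerSeries.coeff 1 S = -12 := by
    have := congrArg (PowerSeries.coeff 2) hS2
    rw [c2_Delta, show (2:ℕ) = 1 + 1 from rfl, PowerSeries.coeff_succ_X_mul,
      PowerSeries.coeff_one_pow, hS1] at this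
    norm_num at this
    linarith
  have hc1Sinv : PowerSeries.coeff 1 (S⁻¹) = 12 := by
    have h : S * S⁻¹ = 1 := PowerSeries.mul_inv_cancel _ (by rw [hS1]; norm_num)
    have := congrArg (PowerSeries.coeff 1) h
    rw [PowerSeries.coeff_one_mul, hc1S, hS1, hccSinv] at this
    simp at this
    linarith
  constructor
  · rw [PowerSeries.coeff_zero_eq_constantCoeff]
    simp [map_mul, hccΦ, cc_E6, hccSinv]
  · have hX : PowerSeries.coeff 1 (PowerSeries.X * Φ (k+2)) = 1 := by
      rw [show (1:ℕ) = 0+1 from rfl, PowerSeries.coeff_succ_X_mul,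
        PowerSeries.coeff_zero_eq_constantCoeff, hccΦ]
    rw [map_add, hX, PowerSeries.coeff_C_mul, map_sub, PowerSeries.coeff_one_mul,
      PowerSeries.coeff_one_mul, hc1Φ, hc1Φ, hc1Sinv, c1_E6, cc_E6, hccSinv,
      hccΦ, alpha_one, alpha_one, map_mul, cc_E6, hccSinv]
    push_cast
    have h1 : ((k:ℚ)+1) ≠ 0 := by positivity
    have h2 : ((k:ℚ)+2) ≠ 0 := by positivity
    have h3 : (6*(k:ℚ)+5) ≠ 0 := by positivity
    have h4 : (6*(k:ℚ)+13) ≠ 0 := by positivity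
    constructor
    · intro h
      field_simp at h ⊢
      linear_combination -h
    · intro h
      field_simp at h ⊢
      linear_combination -h
end
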